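/- For any Gaussian integer β = x + iy with (x,y) ≠ (0,0), the rational integer ν(β) = (x² + y²)/gcd(x,y) is the smallest positive rational integer divisible by β in ℤ[i], and moreover ν(β) divides every rational integer that is divisible by β. -/

import Mathlib

/-- ν(x+iy) = (x²+y²)/gcd(x,y) for a Gaussian integer. -/
def nu (β : GaussianInt) : ℤ := (β.re ^ 2 + β.im ^ 2) / Int.gcd β.re β.im

lemma nu_key (β : GaussianInt) :
    (nu β) * (Int.gcd β.re β.im : ℤ) = β.re ^ 2 + β.im ^ 2 := by
  have hgx : (Int.gcd β.re β.im : ℤ) ∣ β.re := Int.gcd_dvd_left _ _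
  have hgy : (Int.gcd β.re β.im : ℤ) ∣ β.im := Int.gcd_dvd_right _ _
  have hgN : (Int.gcd β.re β.im : ℤ) ∣ β.re ^ 2 + β.im ^ 2 :=
    dvd_add (by rw [sq]; exact hgx.mul_right _) (by rw [sq]; exact hgy.mul_right _)
  exact Int.ediv_mul_cancel hgN

lemma nu_dvd_iff (β : GaussianInt) (hβ : ¬(β.re = 0 ∧ β.im = 0)) (n : ℤ) :
    β ∣ (n : GaussianInt) ↔ nu β ∣ n := by
  set x := β.re with hx
  set y := β.im with hy
  set g : ℤ := (Int.gcd x y : ℤ) with hg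
  have hg0 : g ≠ 0 := by
    intro h
    rw [hg] at h
    exact hβ (Int.gcd_eq_zero_iff.mp (by exact_mod_cast h))
  have hkey : nu β * g = x ^ 2 + y ^ 2 := nu_key β
  obtain ⟨x', hx'⟩ : g ∣ x := Int.gcd_dvd_left _ _
  obtain ⟨y', hy'⟩ : g ∣ y := Int.gcd_dvd_right _ _
  constructor
  · rintro hd
    set c : GaussianInt := ⟨x, -y⟩ with hc
    have hβc : β * c = ((x ^ 2 + y ^ 2 : ℤ) : GaussianInt) := by
      ext <;> simp only [hc, Zsqrtd.re_mul, Zsqrtd.im_mul, ← hx, ← hy,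
        Zsqrtd.re_intCast, Zsqrtd.im_intCast] <;> ring
    have h2 : β * c ∣ (n : GaussianInt) * c := mul_dvd_mul_right hd c
    rw [hβc] at h2
    obtain ⟨h3, h4⟩ := (Zsqrtd.intCast_dvd _ _).mp h2
    have hre : (x ^ 2 + y ^ 2) ∣ n * x := by
      simpa [hc, Zsqrtd.re_mul] using h3
    have him : (x ^ 2 + y ^ 2) ∣ n * y := by
      have : (x ^ 2 + y ^ 2) ∣ -(n * y) := by
        simpa [hc, Zsqrtd.im_mul, mul_comm] using h4
      simpa using this
    have hgcd : (x ^ 2 + y ^ 2) ∣ (Int.gcd (n * x) (n * y) : ℤ) := Int.dvd_coe_gcd hre him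
    rw [Int.gcd_mul_left, Nat.cast_mul, ← hg, ← hkey] at hgcd
    have h5 : nu β ∣ (n.natAbs : ℤ) := (mul_dvd_mul_iff_right hg0).mp hgcd
    exact Int.dvd_natAbs.mp h5
  · rintro ⟨k, hk⟩
    refine ⟨⟨k * x', -(k * y')⟩, ?_⟩
    have e0 : x * x' + y * y' = nu β := by
      apply mul_right_cancel₀ hg0
      rw [hkey]
      linear_combination (-x) * hx' + (-y) * hy'
    ext
    · simp only [Zsqrtd.re_mul, ← hx, ← hy, Zsqrtd.re_intCast]
      linear_combination hk - k * e0
    · simp only [Zsqrtd.im_mul, ← hx, ← hy, Zsqrtd.im_intCast]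
      linear_combination (k * y') * hx' - (k * x') * hy'

theorem nu_least_and_divides (β : GaussianInt) (hβ : ¬(β.re = 0 ∧ β.im = 0)) :
    IsLeast {n : ℤ | 0 < n ∧ β ∣ (n : GaussianInt)} (nu β) ∧
      ∀ n : ℤ, β ∣ (n : GaussianInt) → nu β ∣ n := by
  have hg0 : 0 < (Int.gcd β.re β.im : ℤ) := by
    have : Int.gcd β.re β.im ≠ 0 := fun h => hβ (Int.gcd_eq_zero_iff.mp h)
    exact_mod_cast Nat.pos_of_ne_zero this
  have hN : 0 < β.re ^ 2 + β.im ^ 2 := by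
    rcases not_and_or.mp hβ with h | h <;> positivity
  have hnupos : 0 < nu β := by
    have := nu_key β
    nlinarith [this]
  constructor
  · constructor
    · exact ⟨hnupos, (nu_dvd_iff β hβ (nu β)).mpr dvd_rfl⟩
    · rintro n ⟨hn, hd⟩
      exact Int.le_of_dvd hn ((nu_dvd_iff β hβ n).mp hd)
  · exact fun n hd => (nu_dvd_iff β hβ n).mp hd
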